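/- arXiv:1412.6858 — 2 statements merged into one kernel-verified Lean document; each statement's English description precedes it below -/
import Mathlib

section
/- In the general fixed-point-matrix setup, suppose that T_J ∩ T_G = {0}, that Range(I − W_J) ∩ S_G = {0}, and that Range(I − W_G) ∩ T_G = {0}. Then Fix M = ker(W_G(I − W_J) + (I − W_G) W_J) = {0}, and hence M^∞ = 0. -/
noncomputable section
open Filter Topology

/-- `ℝⁿ` as a Euclidean space. -/
abbrev E (n : ℕ) := EuclideanSpace ℝ (Fin n)

/-- Orthogonal projection onto a subspace `T`, as an endomorphism of `ℝⁿ`. -/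
def projCLM {n : ℕ} (T : Submodule ℝ (E n)) : E n →L[ℝ] E n :=
  T.subtypeL.comp T.orthogonalProjection

/-- A linear map is symmetric positive semidefinite. -/
def IsSymPSD {n : ℕ} (A : E n →L[ℝ] E n) : Prop :=
  (∀ x y : E n, (inner ℝ (A x) y : ℝ) = inner ℝ x (A y)) ∧ ∀ x : E n, (0 : ℝ) ≤ inner ℝ (A x) x

/-- `W = P_T ∘ (I + P_T ∘ H ∘ P_T)⁻¹ ∘ P_T`, the building block of the Douglas–Rachford
fixed-point matrix (`Ring.inverse` is the genuine inverse since `I + P_T H P_T` is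
invertible for symmetric positive semidefinite `H`). -/
def Wop {n : ℕ} (T : Submodule ℝ (E n)) (H : E n →L[ℝ] E n) : E n →L[ℝ] E n :=
  projCLM T * Ring.inverse (1 + projCLM T * H * projCLM T) * projCLM T

/-- The Douglas–Rachford fixed-point matrix `M = I + 2 W_G W_J − W_G − W_J`. -/
def Mop {n : ℕ} (TJ TG : Submodule ℝ (E n)) (HJ HG : E n →L[ℝ] E n) : E n →L[ℝ] E n :=
  1 + (2 : ℝ) • (Wop TG HG * Wop TJ HJ) - Wop TG HG - Wop TJ HJ

/-- The relaxed matrix `M_λ = (1 − λ) I + λ M`. -/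
def Mlam {n : ℕ} (lam : ℝ) (TJ TG : Submodule ℝ (E n)) (HJ HG : E n →L[ℝ] E n) :
    E n →L[ℝ] E n :=
  (1 - lam) • (1 : E n →L[ℝ] E n) + lam • Mop TJ TG HJ HG

/-- The fixed-point set `Fix A = {x | A x = x}` as a submodule, i.e. `ker (A − I)`. -/
def FixM {n : ℕ} (A : E n →L[ℝ] E n) : Submodule ℝ (E n) :=
  LinearMap.ker ((A - 1 : E n →L[ℝ] E n) : E n →ₗ[ℝ] E n)

/-- `M^∞`: the orthogonal projection onto `Fix M`. -/
def Minf {n : ℕ} (TJ TG : Submodule ℝ (E n)) (HJ HG : E n →L[ℝ] E n) : E n →L[ℝ] E n :=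
  projCLM (FixM (Mop TJ TG HJ HG))

/-- The spectral radius of an endomorphism of `ℝⁿ`: the supremum of the moduli of the
complex eigenvalues (eigenvalues of the complexified matrix). -/
def specRad {n : ℕ} (A : E n →L[ℝ] E n) : ℝ :=
  sSup ((fun z : ℂ => ‖z‖) ''
    spectrum ℂ (((LinearMap.toMatrix (EuclideanSpace.basisFun (Fin n) ℝ).toBasis
      (EuclideanSpace.basisFun (Fin n) ℝ).toBasis) A.toLinearMap).map (algebraMap ℝ ℂ)))

/-- The cosine of the Friedrichs angle between two subspaces `U` and `V`. -/
def cF {n : ℕ} (U V : Submodule ℝ (E n)) : ℝ :=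
  sSup {r : ℝ | ∃ u v : E n, u ∈ U ⊓ (U ⊓ V)ᗮ ∧ v ∈ V ⊓ (U ⊓ V)ᗮ ∧
    ‖u‖ ≤ 1 ∧ ‖v‖ ≤ 1 ∧ r = (inner ℝ u v : ℝ)}

namespace Aux
variable {n : ℕ}

lemma proj_apply (T : Submodule ℝ (E n)) (x : E n) :
    projCLM T x = (T.orthogonalProjection x : E n) := rfl

lemma proj_mem (T : Submodule ℝ (E n)) (x : E n) : projCLM T x ∈ T :=
  (T.orthogonalProjection x).2

lemma proj_inner (T : Submodule ℝ (E n)) (x y : E n) :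
    (inner ℝ (projCLM T x) y : ℝ) = inner ℝ x (projCLM T y) :=
  Submodule.inner_starProjection_left_eq_right T x y

lemma proj_eq_zero (T : Submodule ℝ (E n)) {x : E n} (hx : projCLM T x = 0) :
    x ∈ Tᗮ := by
  have h : x - projCLM T x ∈ Tᗮ := Submodule.sub_starProjection_mem_orthogonal (K := T) x
  rw [hx, sub_zero] at h
  exact h

lemma P_sym (T : Submodule ℝ (E n)) (H : E n →L[ℝ] E n) (hH : IsSymPSD H) (x y : E n) :
    (inner ℝ ((projCLM T * H * projCLM T) x) y : ℝ) = inner ℝ x ((projCLM T * H * projCLM T) y) := by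
  simp only [ContinuousLinearMap.mul_apply]
  rw [proj_inner, hH.1, proj_inner]

lemma P_psd (T : Submodule ℝ (E n)) (H : E n →L[ℝ] E n) (hH : IsSymPSD H) (x : E n) :
    (0 : ℝ) ≤ inner ℝ ((projCLM T * H * projCLM T) x) x := by
  have h : (inner ℝ ((projCLM T * H * projCLM T) x) x : ℝ) = inner ℝ (H (projCLM T x)) (projCLM T x) := by
    simp only [ContinuousLinearMap.mul_apply]
    rw [proj_inner]
  rw [h]
  exact hH.2 _

lemma isUnit_one_add (P : E n →L[ℝ] E n)
    (hpsd : ∀ x, (0:ℝ) ≤ inner ℝ (P x) x) : IsUnit (1 + P) := by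
  have hker : LinearMap.ker ((1 + P) : E n →L[ℝ] E n).toLinearMap = ⊥ := by
    rw [LinearMap.ker_eq_bot']
    intro z hz
    have hz' : z + P z = 0 := by simpa using hz
    have h0 : (inner ℝ (z + P z) z : ℝ) = 0 := by rw [hz', inner_zero_left]
    rw [inner_add_left] at h0
    have : ‖z‖ ^ 2 ≤ (0:ℝ) := by
      have := hpsd z
      nlinarith [real_inner_self_eq_norm_sq z]
    have : ‖z‖ = 0 := by nlinarith [norm_nonneg z]
    simpa using this
  have hinj : Function.Injective ((1 + P) : E n →L[ℝ] E n) :=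
    LinearMap.ker_eq_bot.mp hker
  have hsurj : Function.Surjective ((1 + P) : E n →L[ℝ] E n) :=
    (LinearMap.injective_iff_surjective (f := ((1 + P) : E n →L[ℝ] E n).toLinearMap)).mp hinj
  let e : E n ≃ₗ[ℝ] E n := LinearEquiv.ofBijective ((1 + P) : E n →L[ℝ] E n).toLinearMap ⟨hinj, hsurj⟩
  let ce : E n ≃L[ℝ] E n := e.toContinuousLinearEquiv
  refine ⟨⟨1 + P, ce.symm.toContinuousLinearMap, ContinuousLinearMap.ext fun x => ?_,
    ContinuousLinearMap.ext fun x => ?_⟩, rfl⟩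
  · show (1 + P) (ce.symm x) = x
    exact ce.apply_symm_apply x
  · show ce.symm ((1 + P) x) = x
    exact ce.symm_apply_apply x

lemma W_ker (T : Submodule ℝ (E n)) (H : E n →L[ℝ] E n) (hH : IsSymPSD H) (x : E n)
    (hx : Wop T H x = 0) : projCLM T x = 0 := by
  set P := projCLM T * H * projCLM T with hP
  have hu : IsUnit (1 + P) := isUnit_one_add P (P_psd T H hH)
  set U := Ring.inverse (1 + P) with hU
  have hmul : (1 + P) * U = 1 := Ring.mul_inverse_cancel _ hu
  set z := U (projCLM T x) with hz
  have hWx : projCLM T z = 0 := by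
    simpa [Wop, ContinuousLinearMap.mul_apply] using hx
  have hy : z + P z = projCLM T x := by
    have := congrArg (fun A : E n →L[ℝ] E n => A (projCLM T x)) hmul
    simpa [ContinuousLinearMap.mul_apply, ContinuousLinearMap.add_apply] using this
  have h0 : (inner ℝ z (projCLM T x) : ℝ) = 0 := by
    rw [← proj_inner, hWx, inner_zero_left]
  rw [← hy, inner_add_right] at h0
  have hzz : ‖z‖ ^ 2 ≤ (0:ℝ) := by
    have h1 : (0:ℝ) ≤ inner ℝ (P z) z := P_psd T H hH z
    have h2 : (inner ℝ z (P z) : ℝ) = inner ℝ (P z) z := real_inner_comm (P z) z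
    nlinarith [real_inner_self_eq_norm_sq z]
  have : z = 0 := by
    have : ‖z‖ = 0 := by nlinarith [norm_nonneg z]
    simpa using this
  rw [← hy, this]
  simp

lemma W_mem (T : Submodule ℝ (E n)) (H : E n →L[ℝ] E n) (x : E n) : Wop T H x ∈ T := by
  simp only [Wop, ContinuousLinearMap.mul_apply]
  exact proj_mem T _

end Aux

/-- If `T_J ∩ T_G = {0}`, `Range(I − W_J) ∩ S_G = {0}` and
`Range(I − W_G) ∩ T_G = {0}`, then `Fix M = ker(W_G(I − W_J) + (I − W_G)W_J) = {0}` and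
`M^∞ = 0`. -/
theorem statement10 {n : ℕ} (TJ TG : Submodule ℝ (E n)) (HJ HG : E n →L[ℝ] E n)
    (hHJ : IsSymPSD HJ) (hHG : IsSymPSD HG)
    (h1 : TJ ⊓ TG = ⊥)
    (h2 : LinearMap.range ((1 - Wop TJ HJ : E n →L[ℝ] E n) : E n →ₗ[ℝ] E n) ⊓ TGᗮ = ⊥)
    (h3 : LinearMap.range ((1 - Wop TG HG : E n →L[ℝ] E n) : E n →ₗ[ℝ] E n) ⊓ TG = ⊥) :
    FixM (Mop TJ TG HJ HG) = ⊥ ∧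
    LinearMap.ker ((Wop TG HG * (1 - Wop TJ HJ) + (1 - Wop TG HG) * Wop TJ HJ : E n →L[ℝ] E n) :
      E n →ₗ[ℝ] E n) = ⊥ ∧
    Minf TJ TG HJ HG = 0 := by
  set WJ := Wop TJ HJ with hWJdef
  set WG := Wop TG HG with hWGdef
  -- Key injectivity claim
  have key : ∀ x : E n, (WG * (1 - WJ) + (1 - WG) * WJ) x = 0 → x = 0 := by
    intro x hx
    simp only [ContinuousLinearMap.add_apply, ContinuousLinearMap.mul_apply] at hx
    -- second summand lies in TG and in range (1 - WG)
    have hb0 : (1 - WG) (WJ x) = 0 := by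
      have ha : (1 - WG) (WJ x) = -(WG ((1 - WJ) x)) := by
        have := hx
        linear_combination (norm := module) this
      have hmemTG : (1 - WG) (WJ x) ∈ TG := by
        rw [ha]
        exact TG.neg_mem (Aux.W_mem TG HG _)
      have hmemR : (1 - WG) (WJ x) ∈ LinearMap.range ((1 - WG : E n →L[ℝ] E n) : E n →ₗ[ℝ] E n) :=
        ⟨WJ x, rfl⟩
      have : (1 - WG) (WJ x) ∈ LinearMap.range ((1 - WG : E n →L[ℝ] E n) : E n →ₗ[ℝ] E n) ⊓ TG :=
        Submodule.mem_inf.mpr ⟨hmemR, hmemTG⟩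
      rw [h3] at this
      exact (Submodule.mem_bot ℝ).mp this
    -- hence WJ x ∈ TG, and WJ x ∈ TJ, so WJ x = 0
    have hWJx : WJ x = 0 := by
      have hGfix : WJ x = WG (WJ x) := by
        have : WJ x - WG (WJ x) = 0 := by
          simpa [ContinuousLinearMap.sub_apply] using hb0
        exact sub_eq_zero.mp this
      have hmemTG : WJ x ∈ TG := by
        rw [hGfix]; exact Aux.W_mem TG HG _
      have : WJ x ∈ TJ ⊓ TG := Submodule.mem_inf.mpr ⟨Aux.W_mem TJ HJ x, hmemTG⟩
      rw [h1] at this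
      exact (Submodule.mem_bot ℝ).mp this
    -- first summand is zero too, and (1 - WJ) x = x
    have h1mWJ : (1 - WJ) x = x := by
      simp [ContinuousLinearMap.sub_apply, hWJx]
    have hWGx : WG x = 0 := by
      have : WG ((1 - WJ) x) = 0 := by
        rw [hb0] at hx
        simpa using hx
      rwa [h1mWJ] at this
    -- so x ∈ TGᗮ and x ∈ range (1 - WJ)
    have hxorth : x ∈ TGᗮ :=
      Aux.proj_eq_zero TG (Aux.W_ker TG HG hHG x hWGx)
    have hxrange : x ∈ LinearMap.range ((1 - WJ : E n →L[ℝ] E n) : E n →ₗ[ℝ] E n) := ⟨x, h1mWJ⟩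
    have : x ∈ LinearMap.range ((1 - WJ : E n →L[ℝ] E n) : E n →ₗ[ℝ] E n) ⊓ TGᗮ := Submodule.mem_inf.mpr ⟨hxrange, hxorth⟩
    rw [h2] at this
    exact (Submodule.mem_bot ℝ).mp this
  -- relation between M - 1 and the operator
  have hM : Mop TJ TG HJ HG - 1 = -(WG * (1 - WJ) + (1 - WG) * WJ) := by
    simp only [Mop, mul_sub, sub_mul, mul_one, one_mul, two_smul]
    module
  have hFix : FixM (Mop TJ TG HJ HG) = ⊥ := by
    rw [Submodule.eq_bot_iff]
    intro x hx
    have hx' : (Mop TJ TG HJ HG - 1) x = 0 := hx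
    rw [hM] at hx'
    simp only [ContinuousLinearMap.neg_apply, neg_eq_zero] at hx'
    exact key x hx'
  have hker : LinearMap.ker ((WG * (1 - WJ) + (1 - WG) * WJ : E n →L[ℝ] E n) : E n →ₗ[ℝ] E n) = ⊥ := by
    rw [Submodule.eq_bot_iff]
    intro x hx
    exact key x hx
  refine ⟨hFix, hker, ?_⟩
  rw [Minf, hFix]
  refine ContinuousLinearMap.ext fun x => ?_
  show (((⊥ : Submodule ℝ (E n)).orthogonalProjectionOnto x : E n)) = 0
  rw [Submodule.orthogonalProjectionOnto_bot]
  rfl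
end
end

section
/- For any two linear subspaces U and V of ℝⁿ, the cosine of the Friedrichs angle between U and V is strictly less than 1: c_F(U,V) < 1. -/
noncomputable section
open Filter Topology

/-- The cosine of the Friedrichs angle between any two subspaces of `ℝⁿ`
is strictly less than `1`. -/
theorem statement14 {n : ℕ} (U V : Submodule ℝ (E n)) : cF U V < 1 := by
  classical
  set W := (U ⊓ V)ᗮ with hW
  set K1 : Set (E n) := ((U ⊓ W : Submodule ℝ (E n)) : Set (E n)) ∩ Metric.closedBall 0 1
    with hK1def
  set K2 : Set (E n) := ((V ⊓ W : Submodule ℝ (E n)) : Set (E n)) ∩ Metric.closedBall 0 1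
    with hK2def
  have hK1 : IsCompact K1 := (isCompact_closedBall _ _).inter_left
    (Submodule.closed_of_finiteDimensional _)
  have hK2 : IsCompact K2 := (isCompact_closedBall _ _).inter_left
    (Submodule.closed_of_finiteDimensional _)
  have hS : {r : ℝ | ∃ u v : E n, u ∈ U ⊓ (U ⊓ V)ᗮ ∧ v ∈ V ⊓ (U ⊓ V)ᗮ ∧
      ‖u‖ ≤ 1 ∧ ‖v‖ ≤ 1 ∧ r = (inner ℝ u v : ℝ)}
      = (fun p : E n × E n => (inner ℝ p.1 p.2 : ℝ)) '' (K1 ×ˢ K2) := by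
    ext r
    simp only [hK1def, hK2def, Set.mem_image, Set.mem_prod, Set.mem_setOf_eq,
      Set.mem_inter_iff, Metric.mem_closedBall, dist_zero_right, SetLike.mem_coe]
    constructor
    · rintro ⟨u, v, hu, hv, hnu, hnv, rfl⟩
      exact ⟨(u, v), ⟨⟨hu, hnu⟩, ⟨hv, hnv⟩⟩, rfl⟩
    · rintro ⟨⟨u, v⟩, ⟨⟨hu, hnu⟩, hv, hnv⟩, rfl⟩
      exact ⟨u, v, hu, hv, hnu, hnv, rfl⟩
  have hcomp : IsCompact ((fun p : E n × E n => (inner ℝ p.1 p.2 : ℝ)) '' (K1 ×ˢ K2)) :=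
    (hK1.prod hK2).image continuous_inner
  have hne : ((fun p : E n × E n => (inner ℝ p.1 p.2 : ℝ)) '' (K1 ×ˢ K2)).Nonempty := by
    refine ⟨(0 : ℝ), ⟨(0, 0), ⟨⟨?_, ?_⟩, ?_, ?_⟩, by simp⟩⟩
    · exact Submodule.zero_mem _
    · simp
    · exact Submodule.zero_mem _
    · simp
  rw [cF, hS]
  have hmem := hcomp.sSup_mem hne
  obtain ⟨⟨u, v⟩, ⟨⟨⟨hu, huW⟩, hnu⟩, ⟨hv, hvW⟩, hnv⟩, hr⟩ := hmem
  simp only [SetLike.mem_coe, Metric.mem_closedBall, dist_zero_right] at hu huW hnu hv hvW hnv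
  by_contra hlt
  push_neg at hlt
  rw [← hr] at hlt
  have hcs : (inner ℝ u v : ℝ) ≤ ‖u‖ * ‖v‖ := real_inner_le_norm u v
  have hprod : ‖u‖ * ‖v‖ ≤ 1 := by
    calc ‖u‖ * ‖v‖ ≤ 1 * 1 := by
          apply mul_le_mul hnu hnv (norm_nonneg _) zero_le_one
      _ = 1 := by ring
  have h1 : (inner ℝ u v : ℝ) = 1 := le_antisymm (hcs.trans hprod) hlt
  have hnu1 : ‖u‖ = 1 := by
    by_contra h
    have : ‖u‖ < 1 := lt_of_le_of_ne hnu h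
    have hvpos : ‖v‖ ≤ 1 := hnv
    have : ‖u‖ * ‖v‖ < 1 := by
      calc ‖u‖ * ‖v‖ ≤ ‖u‖ * 1 := by
            apply mul_le_mul_of_nonneg_left hnv (norm_nonneg _)
        _ = ‖u‖ := by ring
        _ < 1 := this
    linarith [hcs, hlt]
  have hnv1 : ‖v‖ = 1 := by
    by_contra h
    have : ‖v‖ < 1 := lt_of_le_of_ne hnv h
    have : ‖u‖ * ‖v‖ < 1 := by
      calc ‖u‖ * ‖v‖ ≤ 1 * ‖v‖ := by
            apply mul_le_mul_of_nonneg_right hnu (norm_nonneg _)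
        _ = ‖v‖ := by ring
        _ < 1 := this
    linarith [hcs, hlt]
  have huv : u = v := (inner_eq_one_iff_of_norm_eq_one hnu1 hnv1).mp h1
  have huUV : u ∈ U ⊓ V := ⟨hu, huv ▸ hv⟩
  have : (inner ℝ u u : ℝ) = 0 := huW u huUV
  have : u = 0 := by
    have := inner_self_eq_zero.mp this
    exact this
  rw [this, norm_zero] at hnu1
  exact zero_ne_one hnu1
end
end
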